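/- Let θ, D, T, Z be random variables on a common probability space taking values in finite sets. Suppose (i) T and the pair (D, Z) are conditionally independent given θ, and (ii) Z and θ are conditionally independent given D (i.e., θ → D → Z forms a Markov chain, so Z is a strategic curation of D). Then the mutual information satisfies I(Z; T) ≤ I(D; T). -/

import Mathlib

open Finset
open scoped Classical

/-- Probability of an event under a pmf on a finite sample space. -/
noncomputable def pr {Ω : Type*} [Fintype Ω] (p : Ω → ℝ) (E : Ω → Prop) : ℝ :=
  ∑ ω, if E ω then p ω else 0

/-- Conditional probability `p(E | F)`. -/
noncomputable def cpr {Ω : Type*} [Fintype Ω] (p : Ω → ℝ) (E F : Ω → Prop) : ℝ :=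
  pr p (fun ω => E ω ∧ F ω) / pr p F

/-- `X` and `Y` are conditionally independent given `Z`. -/
def CondIndepRV {Ω A B C : Type*} [Fintype Ω] (p : Ω → ℝ)
    (X : Ω → A) (Y : Ω → B) (Z : Ω → C) : Prop :=
  ∀ x y z, 0 < pr p (fun ω => Z ω = z) →
    cpr p (fun ω => X ω = x ∧ Y ω = y) (fun ω => Z ω = z) =
      cpr p (fun ω => X ω = x) (fun ω => Z ω = z) *
      cpr p (fun ω => Y ω = y) (fun ω => Z ω = z)

/-- Mutual information of two discrete random variables. -/
noncomputable def mInfo {Ω A B : Type*} [Fintype Ω] [Fintype A] [Fintype B]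
    (p : Ω → ℝ) (X : Ω → A) (Y : Ω → B) : ℝ :=
  ∑ x, ∑ y,
    if 0 < pr p (fun ω => X ω = x ∧ Y ω = y) then
      pr p (fun ω => X ω = x ∧ Y ω = y) *
        Real.log (pr p (fun ω => X ω = x ∧ Y ω = y) /
          (pr p (fun ω => X ω = x) * pr p (fun ω => Y ω = y)))
    else 0

section helper
variable {Ω : Type*} [Fintype Ω] {p : Ω → ℝ}

lemma pr_congr {E F : Ω → Prop} (h : ∀ ω, E ω ↔ F ω) : pr p E = pr p F :=
  Finset.sum_congr rfl fun ω _ => by simp only [h ω]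

lemma pr_nonneg (hp : ∀ ω, 0 ≤ p ω) (E : Ω → Prop) : 0 ≤ pr p E :=
  Finset.sum_nonneg fun ω _ => by by_cases h : E ω <;> simp [h, hp ω]

lemma pr_mono (hp : ∀ ω, 0 ≤ p ω) {E F : Ω → Prop} (h : ∀ ω, E ω → F ω) :
    pr p E ≤ pr p F :=
  Finset.sum_le_sum fun ω _ => by
    by_cases hE : E ω
    · simp [hE, h ω hE]
    · simp only [hE, if_false]; split_ifs; exacts [hp ω, le_refl 0]

lemma pr_eq_zero (hp : ∀ ω, 0 ≤ p ω) {E F : Ω → Prop} (h : ∀ ω, E ω → F ω)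
    (hF : pr p F = 0) : pr p E = 0 :=
  le_antisymm (hF ▸ pr_mono hp h) (pr_nonneg hp E)

lemma pr_fiber {A : Type*} [Fintype A] (X : Ω → A) (E : Ω → Prop) :
    ∑ x, pr p (fun ω => X ω = x ∧ E ω) = pr p E := by
  unfold pr
  rw [Finset.sum_comm]
  refine Finset.sum_congr rfl fun ω _ => ?_
  by_cases hE : E ω
  · simp [hE]
  · simp [hE]

lemma condIndep_mul {A B C : Type*} (hp : ∀ ω, 0 ≤ p ω)
    {X : Ω → A} {Y : Ω → B} {W : Ω → C} (h : CondIndepRV p X Y W) (x : A) (y : B) (w : C) :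
    pr p (fun ω => (X ω = x ∧ Y ω = y) ∧ W ω = w) * pr p (fun ω => W ω = w) =
    pr p (fun ω => X ω = x ∧ W ω = w) * pr p (fun ω => Y ω = y ∧ W ω = w) := by
  by_cases hw : 0 < pr p (fun ω => W ω = w)
  · have h2 := h x y w hw
    unfold cpr at h2
    have hne : pr p (fun ω => W ω = w) ≠ 0 := ne_of_gt hw
    field_simp at h2
    exact mul_right_cancel₀ hne (by linear_combination (pr p (fun ω => W ω = w)) * h2)
  · have hw0 : pr p (fun ω => W ω = w) = 0 :=
      le_antisymm (not_lt.1 hw) (pr_nonneg hp _)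
    have hx : pr p (fun ω => X ω = x ∧ W ω = w) = 0 :=
      pr_eq_zero hp (fun ω h => h.2) hw0
    simp [hw0, hx]

end helper

lemma sum_ite_pos_mul {ι : Type*} [Fintype ι] {g : ι → ℝ} (hg : ∀ i, 0 ≤ g i) (c : ℝ) :
    (if 0 < ∑ i, g i then (∑ i, g i) * c else 0) = ∑ i, if 0 < g i then g i * c else 0 := by
  have h1 : ∀ i, (if 0 < g i then g i * c else 0) = g i * c := by
    intro i; by_cases h : 0 < g i
    · simp [h]
    · have h0 : g i = 0 := le_antisymm (not_lt.1 h) (hg i); simp [h0]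
  rw [Finset.sum_congr rfl fun i _ => h1 i, ← Finset.sum_mul]
  by_cases h : 0 < ∑ i, g i
  · simp [h]
  · have h0 : ∑ i, g i = 0 := le_antisymm (not_lt.1 h) (Finset.sum_nonneg fun i _ => hg i)
    simp [h0]

lemma sum_rot3 {A B C : Type*} [Fintype A] [Fintype B] [Fintype C] (f : A → B → C → ℝ) :
    ∑ a, ∑ b, ∑ c, f a b c = ∑ c, ∑ a, ∑ b, f a b c := by
  calc ∑ a, ∑ b, ∑ c, f a b c = ∑ a, ∑ c, ∑ b, f a b c :=
        Finset.sum_congr rfl fun a _ => Finset.sum_comm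
    _ = ∑ c, ∑ a, ∑ b, f a b c := Finset.sum_comm

lemma dpi_abstract {D T Z : Type*} [Fintype D] [Fintype T] [Fintype Z]
    (a : D → Z → T → ℝ) (pD : D → ℝ) (pZ : Z → ℝ) (pT : T → ℝ)
    (pDT : D → T → ℝ) (pZT : Z → T → ℝ) (pDZ : D → Z → ℝ)
    (ha : ∀ d z t, 0 ≤ a d z t)
    (hsumZ : ∀ d t, ∑ z, a d z t = pDT d t)
    (hsumD : ∀ z t, ∑ d, a d z t = pZT z t)
    (hsumT : ∀ d z, ∑ t, a d z t = pDZ d z)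
    (hpZ1 : ∀ z, ∑ t, pZT z t = pZ z)
    (hpZ2 : ∀ z, ∑ d, pDZ d z = pZ z)
    (hDle : ∀ d t, pDT d t ≤ pD d)
    (hTle : ∀ z t, pZT z t ≤ pT t)
    (hM : ∀ d z t, a d z t * pD d = pDT d t * pDZ d z)
    (htot : ∑ d, ∑ z, ∑ t, a d z t = 1) :
    (∑ z, ∑ t, if 0 < pZT z t then pZT z t * Real.log (pZT z t / (pZ z * pT t)) else 0) ≤
    (∑ d, ∑ t, if 0 < pDT d t then pDT d t * Real.log (pDT d t / (pD d * pT t)) else 0) := by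
  -- nonnegativity of marginals
  have hDTnn : ∀ d t, 0 ≤ pDT d t := fun d t => by
    rw [← hsumZ]; exact Finset.sum_nonneg fun z _ => ha d z t
  have hZTnn : ∀ z t, 0 ≤ pZT z t := fun z t => by
    rw [← hsumD]; exact Finset.sum_nonneg fun d _ => ha d z t
  have hDZnn : ∀ d z, 0 ≤ pDZ d z := fun d z => by
    rw [← hsumT]; exact Finset.sum_nonneg fun t _ => ha d z t
  have hZnn : ∀ z, 0 ≤ pZ z := fun z => by
    rw [← hpZ1]; exact Finset.sum_nonneg fun t _ => hZTnn z t
  -- rewrite both sides as triple sums over d z t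
  have hreprD : (∑ d, ∑ t, if 0 < pDT d t then pDT d t * Real.log (pDT d t / (pD d * pT t)) else 0)
      = ∑ d, ∑ z, ∑ t, (if 0 < a d z t then a d z t * Real.log (pDT d t / (pD d * pT t)) else 0) := by
    refine Finset.sum_congr rfl fun d _ => ?_
    rw [Finset.sum_comm]
    refine Finset.sum_congr rfl fun t _ => ?_
    have h := sum_ite_pos_mul (g := fun z => a d z t) (fun z => ha d z t)
      (Real.log (pDT d t / (pD d * pT t)))
    rw [hsumZ d t] at h
    exact h
  have hreprZ : (∑ z, ∑ t, if 0 < pZT z t then pZT z t * Real.log (pZT z t / (pZ z * pT t)) else 0)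
      = ∑ d, ∑ z, ∑ t, (if 0 < a d z t then a d z t * Real.log (pZT z t / (pZ z * pT t)) else 0) := by
    have h1 : ∀ z t, (if 0 < pZT z t then pZT z t * Real.log (pZT z t / (pZ z * pT t)) else 0)
        = ∑ d, (if 0 < a d z t then a d z t * Real.log (pZT z t / (pZ z * pT t)) else 0) := by
      intro z t
      have h := sum_ite_pos_mul (g := fun d => a d z t) (fun d => ha d z t)
        (Real.log (pZT z t / (pZ z * pT t)))
      rw [hsumD z t] at h
      exact h
    rw [Finset.sum_congr rfl fun z _ => Finset.sum_congr rfl fun t (_ : t ∈ univ) => h1 z t]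
    exact sum_rot3 (fun z t d => if 0 < a d z t then a d z t * Real.log (pZT z t / (pZ z * pT t)) else 0)
  -- positivity facts on the support of a
  have hpos : ∀ d z t, 0 < a d z t →
      0 < pDT d t ∧ 0 < pZT z t ∧ 0 < pDZ d z ∧ 0 < pD d ∧ 0 < pT t ∧ 0 < pZ z := by
    intro d z t hA
    have h1 : 0 < pDT d t := lt_of_lt_of_le hA (by
      rw [← hsumZ]; exact Finset.single_le_sum (fun z _ => ha d z t) (mem_univ z))
    have h2 : 0 < pZT z t := lt_of_lt_of_le hA (by
      rw [← hsumD]; exact Finset.single_le_sum (fun d _ => ha d z t) (mem_univ d))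
    have h3 : 0 < pDZ d z := lt_of_lt_of_le hA (by
      rw [← hsumT]; exact Finset.single_le_sum (fun t _ => ha d z t) (mem_univ t))
    have h4 : 0 < pD d := lt_of_lt_of_le h1 (hDle d t)
    have h5 : 0 < pT t := lt_of_lt_of_le h2 (hTle z t)
    have h6 : 0 < pZ z := lt_of_lt_of_le h2 (by
      rw [← hpZ1]; exact Finset.single_le_sum (fun t _ => hZTnn z t) (mem_univ t))
    exact ⟨h1, h2, h3, h4, h5, h6⟩
  -- the key pointwise inequality
  have key : ∀ d z t,
      (if 0 < a d z t then a d z t - pDZ d z * pZT z t / pZ z else 0) ≤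
      (if 0 < a d z t then a d z t * Real.log (pDT d t / (pD d * pT t)) else 0) -
      (if 0 < a d z t then a d z t * Real.log (pZT z t / (pZ z * pT t)) else 0) := by
    intro d z t
    by_cases hA : 0 < a d z t
    · obtain ⟨h1, h2, h3, h4, h5, h6⟩ := hpos d z t hA
      simp only [if_pos hA]
      set r : ℝ := pDZ d z * pZT z t / pZ z with hr_def
      have hr : 0 < r := by positivity
      have hlogM : Real.log (a d z t) + Real.log (pD d)
          = Real.log (pDT d t) + Real.log (pDZ d z) := by
        rw [← Real.log_mul (ne_of_gt hA) (ne_of_gt h4),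
          ← Real.log_mul (ne_of_gt h1) (ne_of_gt h3), hM]
      have hlogr : Real.log r = Real.log (pDZ d z) + Real.log (pZT z t) - Real.log (pZ z) := by
        rw [hr_def, Real.log_div (by positivity) (ne_of_gt h6),
          Real.log_mul (ne_of_gt h3) (ne_of_gt h2)]
      have hL1 : Real.log (pDT d t / (pD d * pT t))
          = Real.log (pDT d t) - Real.log (pD d) - Real.log (pT t) := by
        rw [Real.log_div (ne_of_gt h1) (by positivity), Real.log_mul (ne_of_gt h4) (ne_of_gt h5)]
        ring
      have hL2 : Real.log (pZT z t / (pZ z * pT t))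
          = Real.log (pZT z t) - Real.log (pZ z) - Real.log (pT t) := by
        rw [Real.log_div (ne_of_gt h2) (by positivity), Real.log_mul (ne_of_gt h6) (ne_of_gt h5)]
        ring
      have hlb := Real.log_le_sub_one_of_pos (div_pos hr hA)
      rw [Real.log_div (ne_of_gt hr) (ne_of_gt hA)] at hlb
      -- hlb : log r - log a ≤ r / a - 1
      have hdiff : Real.log (pDT d t / (pD d * pT t)) - Real.log (pZT z t / (pZ z * pT t))
          = Real.log (a d z t) - Real.log r := by
        rw [hL1, hL2, hlogr]; linarith [hlogM]
      have h7 : a d z t * (Real.log (pDT d t / (pD d * pT t))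
          - Real.log (pZT z t / (pZ z * pT t))) = a d z t * (Real.log (a d z t) - Real.log r) := by
        rw [hdiff]
      have h8 : a d z t * (1 - r / a d z t) ≤ a d z t * (Real.log (a d z t) - Real.log r) :=
        mul_le_mul_of_nonneg_left (by linarith) (le_of_lt hA)
      have h9 : a d z t * (1 - r / a d z t) = a d z t - r := by
        field_simp
      nlinarith [h7, h8, h9]
    · simp [hA]
  -- sum of (a - r) over the support is ≥ 0
  have hsum_a : (∑ d, ∑ z, ∑ t, if 0 < a d z t then a d z t else 0) = 1 := by
    rw [← htot]
    refine Finset.sum_congr rfl fun d _ => Finset.sum_congr rfl fun z _ =>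
      Finset.sum_congr rfl fun t _ => ?_
    by_cases hA : 0 < a d z t
    · simp [hA]
    · have h0 : a d z t = 0 := le_antisymm (not_lt.1 hA) (ha d z t)
      simp [h0]
  have hsum_r : (∑ d, ∑ z, ∑ t, if 0 < a d z t then pDZ d z * pZT z t / pZ z else 0) ≤ 1 := by
    have step1 : (∑ d, ∑ z, ∑ t, if 0 < a d z t then pDZ d z * pZT z t / pZ z else 0)
        ≤ ∑ d, ∑ z, ∑ t, (if 0 < pZ z then pDZ d z * pZT z t / pZ z else 0) := by
      refine Finset.sum_le_sum fun d _ => Finset.sum_le_sum fun z _ =>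
        Finset.sum_le_sum fun t _ => ?_
      by_cases hA : 0 < a d z t
      · obtain ⟨_, _, _, _, _, h6⟩ := hpos d z t hA
        rw [if_pos hA, if_pos h6]
      · rw [if_neg hA]
        by_cases hz : 0 < pZ z
        · rw [if_pos hz]
          have := hDZnn d z; have := hZTnn z t; positivity
        · rw [if_neg hz]
    have step2 : (∑ d, ∑ z, ∑ t, if 0 < pZ z then pDZ d z * pZT z t / pZ z else 0)
        = ∑ z, (if 0 < pZ z then pZ z else 0) := by
      rw [Finset.sum_comm]
      refine Finset.sum_congr rfl fun z _ => ?_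
      by_cases hz : 0 < pZ z
      · simp only [if_pos hz]
        have hz' : pZ z ≠ 0 := ne_of_gt hz
        have hinner : ∀ d, (∑ t, pDZ d z * pZT z t / pZ z) = pDZ d z := by
          intro d
          rw [← Finset.sum_div, ← Finset.mul_sum, hpZ1, mul_div_assoc, div_self hz', mul_one]
        rw [Finset.sum_congr rfl fun d _ => hinner d, hpZ2]
      · simp only [if_neg hz]
        simp
    have step3 : (∑ z, if 0 < pZ z then pZ z else 0) = 1 := by
      have h1 : (∑ z, if 0 < pZ z then pZ z else 0) = ∑ z, pZ z := by
        refine Finset.sum_congr rfl fun z _ => ?_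
        by_cases hz : 0 < pZ z
        · rw [if_pos hz]
        · rw [if_neg hz, le_antisymm (not_lt.1 hz) (hZnn z)]
      rw [h1]
      have h2 : ∑ z, pZ z = ∑ z, ∑ t, ∑ d, a d z t := by
        refine Finset.sum_congr rfl fun z _ => ?_
        rw [← hpZ1]
        exact Finset.sum_congr rfl fun t _ => (hsumD z t).symm
      rw [h2, ← htot]
      exact sum_rot3 (fun z t d => a d z t)
    calc _ ≤ _ := step1
      _ = _ := step2
      _ = 1 := step3
  -- combine
  rw [hreprD, hreprZ]
  have hsplit : (∑ d, ∑ z, ∑ t, if 0 < a d z t then a d z t - pDZ d z * pZT z t / pZ z else 0)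
      = (∑ d, ∑ z, ∑ t, if 0 < a d z t then a d z t else 0)
        - (∑ d, ∑ z, ∑ t, if 0 < a d z t then pDZ d z * pZT z t / pZ z else 0) := by
    rw [← Finset.sum_sub_distrib]
    refine Finset.sum_congr rfl fun d _ => ?_
    rw [← Finset.sum_sub_distrib]
    refine Finset.sum_congr rfl fun z _ => ?_
    rw [← Finset.sum_sub_distrib]
    refine Finset.sum_congr rfl fun t _ => ?_
    by_cases hA : 0 < a d z t <;> simp [hA]
  have hmain : (∑ d, ∑ z, ∑ t, if 0 < a d z t then a d z t - pDZ d z * pZT z t / pZ z else 0)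
      ≤ (∑ d, ∑ z, ∑ t, (if 0 < a d z t then a d z t * Real.log (pDT d t / (pD d * pT t)) else 0))
        - (∑ d, ∑ z, ∑ t, (if 0 < a d z t then a d z t * Real.log (pZT z t / (pZ z * pT t)) else 0)) := by
    rw [← Finset.sum_sub_distrib]
    refine Finset.sum_le_sum fun d _ => ?_
    rw [← Finset.sum_sub_distrib]
    refine Finset.sum_le_sum fun z _ => ?_
    rw [← Finset.sum_sub_distrib]
    exact Finset.sum_le_sum fun t _ => key d z t
  have : (0:ℝ) ≤ (∑ d, ∑ z, ∑ t, if 0 < a d z t then a d z t - pDZ d z * pZT z t / pZ z else 0) := by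
    rw [hsplit, hsum_a]; linarith
  linarith



lemma markov_of_condIndep {Ω Θ D T Z : Type*} [Fintype Ω] [Fintype Θ] [Fintype Z]
    (p : Ω → ℝ) (hp : ∀ ω, 0 ≤ p ω)
    (θv : Ω → Θ) (Dv : Ω → D) (Tv : Ω → T) (Zv : Ω → Z)
    (hCI1 : CondIndepRV p Tv (fun ω => (Dv ω, Zv ω)) θv)
    (hCI2 : CondIndepRV p Zv θv Dv) (d : D) (z : Z) (t : T) :
    pr p (fun ω => Dv ω = d ∧ Zv ω = z ∧ Tv ω = t) * pr p (fun ω => Dv ω = d) =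
    pr p (fun ω => Dv ω = d ∧ Tv ω = t) * pr p (fun ω => Dv ω = d ∧ Zv ω = z) := by
  by_cases hd0 : pr p (fun ω => Dv ω = d) = 0
  · have h1 : pr p (fun ω => Dv ω = d ∧ Tv ω = t) = 0 := pr_eq_zero hp (fun ω h => h.1) hd0
    rw [hd0, h1, mul_zero, zero_mul]
  · have hA : ∀ th (z' : Z),
        pr p (fun ω => Dv ω = d ∧ Zv ω = z' ∧ Tv ω = t ∧ θv ω = th) * pr p (fun ω => θv ω = th)
        = pr p (fun ω => Tv ω = t ∧ θv ω = th) *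
          pr p (fun ω => Dv ω = d ∧ Zv ω = z' ∧ θv ω = th) := by
      intro th z'
      have h := condIndep_mul hp hCI1 t (d, z') th
      rw [pr_congr (p := p) (E := fun ω => (Tv ω = t ∧ (Dv ω, Zv ω) = (d, z')) ∧ θv ω = th)
        (F := fun ω => Dv ω = d ∧ Zv ω = z' ∧ Tv ω = t ∧ θv ω = th)
        (fun ω => by simp only [Prod.mk.injEq]; tauto)] at h
      rw [pr_congr (p := p) (E := fun ω => (Dv ω, Zv ω) = (d, z') ∧ θv ω = th)
        (F := fun ω => Dv ω = d ∧ Zv ω = z' ∧ θv ω = th)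
        (fun ω => by simp only [Prod.mk.injEq]; tauto)] at h
      exact h
    have hB : ∀ th,
        pr p (fun ω => Dv ω = d ∧ Zv ω = z ∧ θv ω = th) * pr p (fun ω => Dv ω = d)
        = pr p (fun ω => Dv ω = d ∧ Zv ω = z) * pr p (fun ω => Dv ω = d ∧ θv ω = th) := by
      intro th
      have h := condIndep_mul hp hCI2 z th d
      rw [pr_congr (p := p) (E := fun ω => (Zv ω = z ∧ θv ω = th) ∧ Dv ω = d)
        (F := fun ω => Dv ω = d ∧ Zv ω = z ∧ θv ω = th) (fun ω => by tauto)] at h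
      rw [pr_congr (p := p) (E := fun ω => Zv ω = z ∧ Dv ω = d)
        (F := fun ω => Dv ω = d ∧ Zv ω = z) (fun ω => by tauto)] at h
      rw [pr_congr (p := p) (E := fun ω => θv ω = th ∧ Dv ω = d)
        (F := fun ω => Dv ω = d ∧ θv ω = th) (fun ω => by tauto)] at h
      exact h
    have h5 : ∀ th, pr p (fun ω => Dv ω = d ∧ Zv ω = z ∧ Tv ω = t ∧ θv ω = th)
        = pr p (fun ω => Tv ω = t ∧ θv ω = th) * pr p (fun ω => Dv ω = d ∧ Zv ω = z) *
          pr p (fun ω => Dv ω = d ∧ θv ω = th) /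
          (pr p (fun ω => θv ω = th) * pr p (fun ω => Dv ω = d)) := by
      intro th
      by_cases hθ : pr p (fun ω => θv ω = th) = 0
      · have h1 : pr p (fun ω => Tv ω = t ∧ θv ω = th) = 0 :=
          pr_eq_zero hp (fun ω h => h.2) hθ
        have h2 : pr p (fun ω => Dv ω = d ∧ Zv ω = z ∧ Tv ω = t ∧ θv ω = th) = 0 :=
          pr_eq_zero hp (fun ω h => h.2.2.2) hθ
        rw [h1, h2]; simp
      · rw [eq_div_iff (mul_ne_zero hθ hd0)]
        linear_combination (pr p (fun ω => Dv ω = d)) * hA th z +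
          (pr p (fun ω => Tv ω = t ∧ θv ω = th)) * hB th
    have h6 : ∀ th, pr p (fun ω => Dv ω = d ∧ Tv ω = t ∧ θv ω = th) * pr p (fun ω => θv ω = th)
        = pr p (fun ω => Tv ω = t ∧ θv ω = th) * pr p (fun ω => Dv ω = d ∧ θv ω = th) := by
      intro th
      have hfib : ∑ z', pr p (fun ω => Dv ω = d ∧ Zv ω = z' ∧ Tv ω = t ∧ θv ω = th)
          = pr p (fun ω => Dv ω = d ∧ Tv ω = t ∧ θv ω = th) := by
        calc ∑ z', pr p (fun ω => Dv ω = d ∧ Zv ω = z' ∧ Tv ω = t ∧ θv ω = th)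
            = ∑ z', pr p (fun ω => Zv ω = z' ∧ (Dv ω = d ∧ Tv ω = t ∧ θv ω = th)) :=
              Finset.sum_congr rfl fun z' _ => pr_congr fun ω => by tauto
          _ = pr p (fun ω => Dv ω = d ∧ Tv ω = t ∧ θv ω = th) := pr_fiber Zv _
      have hfib2 : ∑ z', pr p (fun ω => Dv ω = d ∧ Zv ω = z' ∧ θv ω = th)
          = pr p (fun ω => Dv ω = d ∧ θv ω = th) := by
        calc ∑ z', pr p (fun ω => Dv ω = d ∧ Zv ω = z' ∧ θv ω = th)
            = ∑ z', pr p (fun ω => Zv ω = z' ∧ (Dv ω = d ∧ θv ω = th)) :=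
              Finset.sum_congr rfl fun z' _ => pr_congr fun ω => by tauto
          _ = pr p (fun ω => Dv ω = d ∧ θv ω = th) := pr_fiber Zv _
      calc pr p (fun ω => Dv ω = d ∧ Tv ω = t ∧ θv ω = th) * pr p (fun ω => θv ω = th)
          = (∑ z', pr p (fun ω => Dv ω = d ∧ Zv ω = z' ∧ Tv ω = t ∧ θv ω = th)) *
            pr p (fun ω => θv ω = th) := by rw [hfib]
        _ = ∑ z', pr p (fun ω => Dv ω = d ∧ Zv ω = z' ∧ Tv ω = t ∧ θv ω = th) *
            pr p (fun ω => θv ω = th) := Finset.sum_mul _ _ _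
        _ = ∑ z', pr p (fun ω => Tv ω = t ∧ θv ω = th) *
            pr p (fun ω => Dv ω = d ∧ Zv ω = z' ∧ θv ω = th) :=
            Finset.sum_congr rfl fun z' _ => hA th z'
        _ = pr p (fun ω => Tv ω = t ∧ θv ω = th) *
            ∑ z', pr p (fun ω => Dv ω = d ∧ Zv ω = z' ∧ θv ω = th) := (Finset.mul_sum _ _ _).symm
        _ = pr p (fun ω => Tv ω = t ∧ θv ω = th) * pr p (fun ω => Dv ω = d ∧ θv ω = th) := by
            rw [hfib2]
    have h7 : ∀ th, pr p (fun ω => Dv ω = d ∧ Tv ω = t ∧ θv ω = th)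
        = pr p (fun ω => Tv ω = t ∧ θv ω = th) * pr p (fun ω => Dv ω = d ∧ θv ω = th) /
          pr p (fun ω => θv ω = th) := by
      intro th
      by_cases hθ : pr p (fun ω => θv ω = th) = 0
      · have h1 : pr p (fun ω => Tv ω = t ∧ θv ω = th) = 0 :=
          pr_eq_zero hp (fun ω h => h.2) hθ
        have h2 : pr p (fun ω => Dv ω = d ∧ Tv ω = t ∧ θv ω = th) = 0 :=
          pr_eq_zero hp (fun ω h => h.2.2) hθ
        rw [h1, h2]; simp
      · rw [eq_div_iff hθ]; exact h6 th
    have hfibT : ∑ th, pr p (fun ω => Dv ω = d ∧ Zv ω = z ∧ Tv ω = t ∧ θv ω = th)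
        = pr p (fun ω => Dv ω = d ∧ Zv ω = z ∧ Tv ω = t) := by
      calc ∑ th, pr p (fun ω => Dv ω = d ∧ Zv ω = z ∧ Tv ω = t ∧ θv ω = th)
          = ∑ th, pr p (fun ω => θv ω = th ∧ (Dv ω = d ∧ Zv ω = z ∧ Tv ω = t)) :=
            Finset.sum_congr rfl fun th _ => pr_congr fun ω => by tauto
        _ = pr p (fun ω => Dv ω = d ∧ Zv ω = z ∧ Tv ω = t) := pr_fiber θv _
    have hfibDT : ∑ th, pr p (fun ω => Dv ω = d ∧ Tv ω = t ∧ θv ω = th)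
        = pr p (fun ω => Dv ω = d ∧ Tv ω = t) := by
      calc ∑ th, pr p (fun ω => Dv ω = d ∧ Tv ω = t ∧ θv ω = th)
          = ∑ th, pr p (fun ω => θv ω = th ∧ (Dv ω = d ∧ Tv ω = t)) :=
            Finset.sum_congr rfl fun th _ => pr_congr fun ω => by tauto
        _ = pr p (fun ω => Dv ω = d ∧ Tv ω = t) := pr_fiber θv _
    have hstep : ∀ (x c : ℝ), x / (c * pr p (fun ω => Dv ω = d)) * pr p (fun ω => Dv ω = d)
        = x / c := by
      intro x c
      rcases eq_or_ne c 0 with h | h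
      · simp [h]
      · field_simp
    calc pr p (fun ω => Dv ω = d ∧ Zv ω = z ∧ Tv ω = t) * pr p (fun ω => Dv ω = d)
        = (∑ th, pr p (fun ω => Dv ω = d ∧ Zv ω = z ∧ Tv ω = t ∧ θv ω = th)) *
          pr p (fun ω => Dv ω = d) := by rw [hfibT]
      _ = ∑ th, pr p (fun ω => Dv ω = d ∧ Zv ω = z ∧ Tv ω = t ∧ θv ω = th) *
          pr p (fun ω => Dv ω = d) := Finset.sum_mul _ _ _
      _ = ∑ th, pr p (fun ω => Dv ω = d ∧ Zv ω = z) *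
          (pr p (fun ω => Tv ω = t ∧ θv ω = th) * pr p (fun ω => Dv ω = d ∧ θv ω = th) /
            pr p (fun ω => θv ω = th)) := by
          refine Finset.sum_congr rfl fun th _ => ?_
          rw [h5 th, hstep]
          ring
      _ = pr p (fun ω => Dv ω = d ∧ Zv ω = z) *
          ∑ th, (pr p (fun ω => Tv ω = t ∧ θv ω = th) * pr p (fun ω => Dv ω = d ∧ θv ω = th) /
            pr p (fun ω => θv ω = th)) := (Finset.mul_sum _ _ _).symm
      _ = pr p (fun ω => Dv ω = d ∧ Zv ω = z) *
          ∑ th, pr p (fun ω => Dv ω = d ∧ Tv ω = t ∧ θv ω = th) := by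
          rw [Finset.sum_congr rfl fun th _ => (h7 th).symm]
      _ = pr p (fun ω => Dv ω = d ∧ Zv ω = z) * pr p (fun ω => Dv ω = d ∧ Tv ω = t) := by
          rw [hfibDT]
      _ = pr p (fun ω => Dv ω = d ∧ Tv ω = t) * pr p (fun ω => Dv ω = d ∧ Zv ω = z) :=
          mul_comm _ _

theorem stmt4 {Ω Θ D T Z : Type*} [Fintype Ω] [Fintype Θ] [Fintype D] [Fintype T] [Fintype Z]
    (p : Ω → ℝ) (hp : ∀ ω, 0 ≤ p ω) (hps : ∑ ω, p ω = 1)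
    (θv : Ω → Θ) (Dv : Ω → D) (Tv : Ω → T) (Zv : Ω → Z)
    (hCI1 : CondIndepRV p Tv (fun ω => (Dv ω, Zv ω)) θv)
    (hCI2 : CondIndepRV p Zv θv Dv) :
    mInfo p Zv Tv ≤ mInfo p Dv Tv := by
  unfold mInfo
  refine dpi_abstract (fun d z t => pr p (fun ω => Dv ω = d ∧ Zv ω = z ∧ Tv ω = t))
    (fun d => pr p (fun ω => Dv ω = d)) (fun z => pr p (fun ω => Zv ω = z))
    (fun t => pr p (fun ω => Tv ω = t))
    (fun d t => pr p (fun ω => Dv ω = d ∧ Tv ω = t))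
    (fun z t => pr p (fun ω => Zv ω = z ∧ Tv ω = t))
    (fun d z => pr p (fun ω => Dv ω = d ∧ Zv ω = z))
    (fun d z t => pr_nonneg hp _) ?_ ?_ ?_ ?_ ?_ ?_ ?_ ?_ ?_
  · intro d t
    calc ∑ z, pr p (fun ω => Dv ω = d ∧ Zv ω = z ∧ Tv ω = t)
        = ∑ z, pr p (fun ω => Zv ω = z ∧ (Dv ω = d ∧ Tv ω = t)) :=
          Finset.sum_congr rfl fun z _ => pr_congr fun ω => by tauto
      _ = pr p (fun ω => Dv ω = d ∧ Tv ω = t) := pr_fiber Zv _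
  · intro z t
    exact pr_fiber Dv _
  · intro d z
    calc ∑ t, pr p (fun ω => Dv ω = d ∧ Zv ω = z ∧ Tv ω = t)
        = ∑ t, pr p (fun ω => Tv ω = t ∧ (Dv ω = d ∧ Zv ω = z)) :=
          Finset.sum_congr rfl fun t _ => pr_congr fun ω => by tauto
      _ = pr p (fun ω => Dv ω = d ∧ Zv ω = z) := pr_fiber Tv _
  · intro z
    calc ∑ t, pr p (fun ω => Zv ω = z ∧ Tv ω = t)
        = ∑ t, pr p (fun ω => Tv ω = t ∧ Zv ω = z) :=
          Finset.sum_congr rfl fun t _ => pr_congr fun ω => by tauto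
      _ = pr p (fun ω => Zv ω = z) := pr_fiber Tv _
  · intro z
    exact pr_fiber Dv _
  · intro d t
    exact pr_mono hp fun ω h => h.1
  · intro z t
    exact pr_mono hp fun ω h => h.2
  · exact fun d z t => markov_of_condIndep p hp θv Dv Tv Zv hCI1 hCI2 d z t
  · calc ∑ d, ∑ z, ∑ t, pr p (fun ω => Dv ω = d ∧ Zv ω = z ∧ Tv ω = t)
        = ∑ d, ∑ z, pr p (fun ω => Dv ω = d ∧ Zv ω = z) := by
          refine Finset.sum_congr rfl fun d _ => Finset.sum_congr rfl fun z _ => ?_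
          calc ∑ t, pr p (fun ω => Dv ω = d ∧ Zv ω = z ∧ Tv ω = t)
              = ∑ t, pr p (fun ω => Tv ω = t ∧ (Dv ω = d ∧ Zv ω = z)) :=
                Finset.sum_congr rfl fun t _ => pr_congr fun ω => by tauto
            _ = pr p (fun ω => Dv ω = d ∧ Zv ω = z) := pr_fiber Tv _
      _ = ∑ d, pr p (fun ω => Dv ω = d) := by
          refine Finset.sum_congr rfl fun d _ => ?_
          calc ∑ z, pr p (fun ω => Dv ω = d ∧ Zv ω = z)
              = ∑ z, pr p (fun ω => Zv ω = z ∧ Dv ω = d) :=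
                Finset.sum_congr rfl fun z _ => pr_congr fun ω => by tauto
            _ = pr p (fun ω => Dv ω = d) := pr_fiber Zv _
      _ = pr p (fun _ => True) := by
          calc ∑ d, pr p (fun ω => Dv ω = d)
              = ∑ d, pr p (fun ω => Dv ω = d ∧ True) :=
                Finset.sum_congr rfl fun d _ => pr_congr fun ω => by tauto
            _ = pr p (fun _ => True) := pr_fiber Dv _
      _ = 1 := by unfold pr; simpa using hps
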